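/- Let D̄ ⊆ 𝔽_p^n and let D ⊆ ℤ_p^n be its preimage under coordinatewise reduction mod p. Let f ∈ ℤ_p[x_1,…,x_n] have no critical points in D, i.e. for every P ∈ D there exists i with ∂f/∂x_i(P) ≠ 0, and put c(f,D) = sup_{P ∈ D} min_{1 ≤ i ≤ n} v(∂f/∂x_i(P)). Let g ∈ ℤ_p[x_1,…,x_n] and let β be a positive integer with β > 2·c(f,D) + 1 (in particular c(f,D) < ∞), and set F(x) = f(x) + p^β g(x). Then for every real s > 0: ∫_D |f(x)|^s dμ(x) = ∫_D |F(x)|^s dμ(x). -/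

import Mathlib

open MeasureTheory MvPolynomial

namespace IgusaTS

noncomputable instance (p : ℕ) [Fact p.Prime] : MeasurableSpace ℤ_[p] := borel _
instance (p : ℕ) [Fact p.Prime] : BorelSpace ℤ_[p] := ⟨rfl⟩

variable (p : ℕ) [Fact p.Prime]

/-- The normalized Haar measure on `ℤ_p^N` (total mass `1`). -/
noncomputable def haarN (N : ℕ) : Measure (Fin N → ℤ_[p]) := Measure.addHaarMeasure ⊤

/-- The Igusa local zeta function `Z(h;s) = ∫_{ℤ_p^N} |h(x)|^s dμ(x)`. -/
noncomputable def Zeta {N : ℕ} (h : MvPolynomial (Fin N) ℤ_[p]) (s : ℝ) : ℝ :=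
  ∫ x, ‖MvPolynomial.eval x h‖ ^ s ∂(haarN p N)

/-- `E_A = {x ∈ ℤ_p^n : all xᵢ ≠ 0 and (v(x₁),…,v(xₙ)) ∈ A}`. -/
def Eset {n : ℕ} (A : Set (Fin n → ℝ)) : Set (Fin n → ℤ_[p]) :=
  {x | (∀ i, x i ≠ 0) ∧ (fun i => ((x i).valuation : ℝ)) ∈ A}

/-- The Thom–Sebastiani sum `(f ⊕ g)(x,y) = f(x) + g(y)`. -/
noncomputable def oplus {n m : ℕ} (f : MvPolynomial (Fin n) ℤ_[p])
    (g : MvPolynomial (Fin m) ℤ_[p]) : MvPolynomial (Fin (n + m)) ℤ_[p] :=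
  rename (Fin.castAdd m) f + rename (Fin.natAdd n) g

/-- `Z_{A×B}(h;s) = ∫_{E_A × E_B} |h(x,y)|^s dμ(x,y)`. -/
noncomputable def ZetaAB {n m : ℕ} (A : Set (Fin n → ℝ)) (B : Set (Fin m → ℝ))
    (h : MvPolynomial (Fin (n + m)) ℤ_[p]) (s : ℝ) : ℝ :=
  ∫ z in {z : Fin (n + m) → ℤ_[p] |
      (fun i => z (Fin.castAdd m i)) ∈ Eset p A ∧ (fun j => z (Fin.natAdd n j)) ∈ Eset p B},
    ‖MvPolynomial.eval z h‖ ^ s ∂(haarN p (n + m))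

open scoped Classical in
/-- The valuation `v : ℤ_p → ℕ∞` with `v(0) = ∞`. -/
noncomputable def valInf (x : ℤ_[p]) : ℕ∞ :=
  if x = 0 then ⊤ else (x.valuation : ℕ∞)


lemma haarN_univ (n : ℕ) : (haarN p n) Set.univ = 1 := by
  rw [haarN, ← TopologicalSpace.PositiveCompacts.coe_top]
  exact Measure.addHaarMeasure_self

instance (n : ℕ) : IsFiniteMeasure (haarN p n) :=
  ⟨by rw [haarN_univ]; exact ENNReal.one_lt_top⟩

instance (n : ℕ) : (haarN p n).IsAddLeftInvariant :=
  Measure.isAddLeftInvariant_addHaarMeasure ⊤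

variable {p}

-- basic p facts
lemma p_prime : p.Prime := Fact.out
lemma p_ne_zero' : (p : ℤ_[p]) ≠ 0 := by
  intro h
  have h1 : ‖(p : ℤ_[p])‖ = 0 := by rw [h, norm_zero]
  rw [PadicInt.norm_p] at h1
  have hp1 : 1 < p := (p_prime (p := p)).one_lt
  have : (0:ℝ) < (p:ℝ)⁻¹ := by positivity
  rw [h1] at this
  exact lt_irrefl _ this

lemma dvd_iff_norm (z : ℤ_[p]) (k : ℕ) :
    (p : ℤ_[p]) ^ k ∣ z ↔ ‖z‖ ≤ (p : ℝ) ^ (-(k : ℤ)) := by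
  rw [PadicInt.norm_le_pow_iff_mem_span_pow, Ideal.mem_span_singleton]

-- continuity of evaluation
lemma continuous_mveval {n : ℕ} (f : MvPolynomial (Fin n) ℤ_[p]) :
    Continuous fun x : Fin n → ℤ_[p] => eval x f := by
  induction f using MvPolynomial.induction_on with
  | C a => simpa using continuous_const
  | add f g hf hg =>
      simp only [map_add]
      exact hf.add hg
  | mul_X f i hf =>
      simp only [map_mul, eval_X]
      exact hf.mul (continuous_apply i)

/-- the basic divisibility sets -/
def Mset {n : ℕ} (k : ℕ) (q : MvPolynomial (Fin n) ℤ_[p]) : Set (Fin n → ℤ_[p]) :=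
  {x | (p : ℤ_[p]) ^ k ∣ eval x q}

lemma isClosed_Mset {n : ℕ} (k : ℕ) (q : MvPolynomial (Fin n) ℤ_[p]) :
    IsClosed (Mset k q) := by
  have : Mset k q = (fun x : Fin n → ℤ_[p] => eval x q) ⁻¹'
      (Metric.closedBall 0 ((p : ℝ) ^ (-(k : ℤ)))) := by
    ext x
    simp only [Mset, Set.mem_setOf_eq, Set.mem_preimage, Metric.mem_closedBall,
      dist_zero_right, dvd_iff_norm]
  rw [this]
  exact (Metric.isClosed_closedBall).preimage (continuous_mveval q)

lemma measurable_Mset {n : ℕ} (k : ℕ) (q : MvPolynomial (Fin n) ℤ_[p]) :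
    MeasurableSet (Mset k q) := (isClosed_Mset k q).measurableSet

lemma mem_Mset_sub_iff {n : ℕ} (k : ℕ) (q : MvPolynomial (Fin n) ℤ_[p]) (c : ℤ_[p])
    (x : Fin n → ℤ_[p]) : x ∈ Mset k (q - C c) ↔ (p : ℤ_[p]) ^ k ∣ eval x q - c := by
  simp [Mset]

-- toZMod facts
lemma toZMod_eq_iff_dvd (z w : ℤ_[p]) :
    PadicInt.toZMod z = PadicInt.toZMod w ↔ (p : ℤ_[p]) ∣ z - w := by
  rw [← sub_eq_zero, ← map_sub, ← RingHom.mem_ker, PadicInt.ker_toZMod,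
    PadicInt.maximalIdeal_eq_span_p, Ideal.mem_span_singleton]

lemma toZModPow_eq_iff_dvd (m : ℕ) (z w : ℤ_[p]) :
    PadicInt.toZModPow m z = PadicInt.toZModPow m w ↔ (p : ℤ_[p]) ^ m ∣ z - w := by
  rw [← sub_eq_zero, ← map_sub, ← RingHom.mem_ker, PadicInt.ker_toZModPow,
    Ideal.mem_span_singleton]

lemma toZMod_natCast_val (m : ZMod p) : PadicInt.toZMod ((m.val : ℤ_[p])) = m := by
  haveI : NeZero p := ⟨(p_prime (p := p)).ne_zero⟩
  rw [map_natCast]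
  exact ZMod.natCast_rightInverse m

lemma toZModPow_natCast_val (k : ℕ) (m : ZMod (p ^ k)) :
    PadicInt.toZModPow k ((m.val : ℤ_[p])) = m := by
  haveI : NeZero (p ^ k) := ⟨pow_ne_zero _ (p_prime (p := p)).ne_zero⟩
  rw [map_natCast]
  exact ZMod.natCast_rightInverse m



-- Taylor expansion
lemma taylor1 {R : Type*} [CommRing R] {n : ℕ} (f : MvPolynomial (Fin n) R)
    (x u : Fin n → R) (t : R) (hu : ∀ i, t ∣ u i) :
    ∃ r, eval (x + u) f
        = eval x f + (∑ i, u i * eval x (pderiv i f)) + r ∧ t * t ∣ r := by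
  induction f using MvPolynomial.induction_on with
  | C a => exact ⟨0, by simp, dvd_zero _⟩
  | add f g hf hg =>
      obtain ⟨rf, hf1, hf2⟩ := hf
      obtain ⟨rg, hg1, hg2⟩ := hg
      refine ⟨rf + rg, ?_, dvd_add hf2 hg2⟩
      simp only [map_add, hf1, hg1, mul_add, Finset.sum_add_distrib]; ring
  | mul_X f i hf =>
      obtain ⟨r, h1, h2⟩ := hf
      refine ⟨(∑ j, u j * eval x (pderiv j f)) * u i + r * (x i + u i), ?_, ?_⟩
      · have hx : ∀ j, eval x (pderiv j (f * X i))
            = eval x (pderiv j f) * x i + eval x f * (if i = j then 1 else 0) := by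
          intro j
          rw [pderiv_mul, pderiv_X]
          classical
          by_cases h : i = j <;> simp [h, Pi.single_apply]
        have hsum : (∑ j, u j * eval x (pderiv j (f * X i)))
            = (∑ j, u j * eval x (pderiv j f)) * x i + u i * eval x f := by
          simp only [hx, mul_add, Finset.sum_add_distrib, Finset.sum_mul, mul_ite, mul_one,
            mul_zero]
          congr 1
          · exact Finset.sum_congr rfl fun j _ => by ring
          · rw [Finset.sum_ite_eq Finset.univ i (fun j => u j * eval x f)]
            simp [mul_comm]
        rw [map_mul, h1, eval_X, map_mul, eval_X, hsum]
        simp only [Pi.add_apply]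
        ring
      · refine dvd_add (mul_dvd_mul ?_ (hu i)) (dvd_mul_of_dvd_left h2 _)
        exact Finset.dvd_sum fun j _ => dvd_mul_of_dvd_left (hu j) _

lemma taylor0 {R : Type*} [CommRing R] {n : ℕ} (f : MvPolynomial (Fin n) R)
    (x u : Fin n → R) (t : R) (hu : ∀ i, t ∣ u i) :
    t ∣ eval (x + u) f - eval x f := by
  obtain ⟨r, h1, h2⟩ := taylor1 f x u t hu
  have : eval (x + u) f - eval x f = (∑ i, u i * eval x (pderiv i f)) + r := by
    rw [h1]; ring
  rw [this]
  exact dvd_add (Finset.dvd_sum fun j _ => dvd_mul_of_dvd_left (hu j) _)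
    (dvd_trans (dvd_mul_left t t) h2)

lemma taylor0' {n : ℕ} (f : MvPolynomial (Fin n) ℤ_[p]) (x y : Fin n → ℤ_[p]) (t : ℤ_[p])
    (hu : ∀ i, t ∣ y i - x i) : t ∣ eval y f - eval x f := by
  have := taylor0 f x (y - x) t (by simpa using hu)
  simpa using this

-- partition lemma
lemma meas_part {X : Type*} [MeasurableSpace X] (μ : Measure X)
    {ι : Type*} [Fintype ι] (π : X → ι) (hm : ∀ y, MeasurableSet (π ⁻¹' {y}))
    {T : Set X} (hT : MeasurableSet T) : μ T = ∑ y : ι, μ (T ∩ π ⁻¹' {y}) := by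
  have h1 : T = ⋃ y : ι, T ∩ π ⁻¹' {y} := by ext x; simp
  rw [← tsum_fintype (L := SummationFilter.unconditional _)]
  conv_lhs => rw [h1]
  refine measure_iUnion ?_ (fun y => hT.inter (hm y))
  intro a b hab
  simp only [Set.disjoint_left]
  rintro x ⟨-, ha⟩ ⟨-, hb⟩
  exact hab (by simp only [Set.mem_preimage, Set.mem_singleton_iff] at ha hb; rw [← ha, hb])

-- fibers of reduction maps
noncomputable def redN {n : ℕ} (m : ℕ) (x : Fin n → ℤ_[p]) : Fin n → ZMod (p ^ m) :=
  fun i => PadicInt.toZModPow m (x i)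

lemma mem_fiber_iff {n : ℕ} (m : ℕ) (x x₁ : Fin n → ℤ_[p]) :
    redN m x = redN m x₁ ↔ ∀ i, (p : ℤ_[p]) ^ m ∣ x i - x₁ i := by
  constructor
  · intro h i
    rw [← toZModPow_eq_iff_dvd]
    exact congrFun h i
  · intro h
    funext i
    rw [redN, redN, toZModPow_eq_iff_dvd]
    exact h i

lemma measurable_fiber {n : ℕ} (m : ℕ) (y : Fin n → ZMod (p ^ m)) :
    MeasurableSet ((redN (n := n) m) ⁻¹' {y}) := by
  have : (redN (n := n) m) ⁻¹' {y}
      = ⋂ i, Mset m ((X i : MvPolynomial (Fin n) ℤ_[p]) - C ((y i).val : ℤ_[p])) := by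
    ext x
    simp only [Set.mem_preimage, Set.mem_singleton_iff, Set.mem_iInter, mem_Mset_sub_iff,
      eval_X]
    constructor
    · intro h i
      rw [← toZModPow_eq_iff_dvd, toZModPow_natCast_val]
      exact congrFun h i
    · intro h
      funext i
      show PadicInt.toZModPow m (x i) = y i
      have := (toZModPow_eq_iff_dvd m (x i) (((y i).val : ℤ_[p]))).2 (h i)
      rw [this, toZModPow_natCast_val]
  rw [this]
  exact MeasurableSet.iInter fun i => measurable_Mset _ _



lemma class_step {n : ℕ} (h : MvPolynomial (Fin n) ℤ_[p]) (x₁ : Fin n → ℤ_[p])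
    (e k : ℕ) (i₀ : Fin n) (d : ℤ_[p])
    (hek : e + 1 ≤ k)
    (hdall : ∀ i, (p : ℤ_[p]) ^ e ∣ eval x₁ (pderiv i h))
    (hd0 : eval x₁ (pderiv i₀ h) = (p : ℤ_[p]) ^ e * d)
    (hdu : ¬ (p : ℤ_[p]) ∣ d) :
    (p : ENNReal) * haarN p n
        {x | (∀ i, (p : ℤ_[p]) ^ k ∣ x i - x₁ i) ∧ (p : ℤ_[p]) ^ (k + e + 1) ∣ eval x h}
      = haarN p n
        {x | (∀ i, (p : ℤ_[p]) ^ k ∣ x i - x₁ i) ∧ (p : ℤ_[p]) ^ (k + e) ∣ eval x h} := by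
  haveI : NeZero p := ⟨(p_prime (p := p)).ne_zero⟩
  set P : ℤ_[p] := (p : ℤ_[p]) with hP
  set S1 := {x | (∀ i, P ^ k ∣ x i - x₁ i) ∧ P ^ (k + e + 1) ∣ eval x h} with hS1def
  set S0 := {x | (∀ i, P ^ k ∣ x i - x₁ i) ∧ P ^ (k + e) ∣ eval x h} with hS0def
  have hkk : k + e + 1 ≤ k + k := by omega
  have key : ∀ x, (∀ i, P ^ k ∣ x i - x₁ i) → P ^ (k + e) ∣ eval x h - eval x₁ h := by
    intro x hx
    obtain ⟨r, h1, h2⟩ := taylor1 h x₁ (x - x₁) (P ^ k) (by simpa using hx)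
    have hxx : x₁ + (x - x₁) = x := by abel
    rw [hxx] at h1
    have hmain : eval x h - eval x₁ h
        = (∑ i, (x - x₁) i * eval x₁ (pderiv i h)) + r := by rw [h1]; ring
    rw [hmain]
    refine dvd_add (Finset.dvd_sum fun i _ => ?_) ?_
    · rw [pow_add]; exact mul_dvd_mul (by simpa using hx i) (hdall i)
    · refine dvd_trans (dvd_trans ?_ (dvd_refl (P ^ k * P ^ k))) h2
      rw [← pow_add]
      exact pow_dvd_pow _ (by omega)
  by_cases hbase : P ^ (k + e) ∣ eval x₁ h
  · -- main case
    set A : ZMod p → Set (Fin n → ℤ_[p]) := fun m =>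
      {x | (∀ i, P ^ k ∣ x i - x₁ i)
        ∧ P ^ (k + e + 1) ∣ eval x h - P ^ (k + e) * ((m.val : ℤ_[p]))} with hAdef
    have hAmeas : ∀ m, MeasurableSet (A m) := by
      intro m
      have : A m = (⋂ i, Mset k ((X i : MvPolynomial (Fin n) ℤ_[p]) - C (x₁ i)))
          ∩ Mset (k + e + 1) (h - C (P ^ (k + e) * ((m.val : ℤ_[p])))) := by
        ext x
        simp only [hAdef, Set.mem_setOf_eq, Set.mem_inter_iff, Set.mem_iInter,
          mem_Mset_sub_iff, eval_X]
        exact Iff.rfl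
      rw [this]
      exact (MeasurableSet.iInter fun i => measurable_Mset _ _).inter (measurable_Mset _ _)
    have hA_sub : ∀ m, A m ⊆ S0 := by
      rintro m x ⟨hC, hdvd⟩
      refine ⟨hC, ?_⟩
      have : eval x h = (eval x h - P ^ (k + e) * ((m.val : ℤ_[p])))
          + P ^ (k + e) * ((m.val : ℤ_[p])) := by ring
      rw [this]
      exact dvd_add (dvd_trans (pow_dvd_pow _ (Nat.le_succ _)) hdvd) (dvd_mul_right _ _)
    have hS0_sub : S0 ⊆ ⋃ m : ZMod p, A m := by
      rintro x ⟨hC, hdvd⟩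
      obtain ⟨w, hw⟩ := hdvd
      refine Set.mem_iUnion.2 ⟨PadicInt.toZMod w, hC, ?_⟩
      have h1 : eval x h - P ^ (k + e) * (((PadicInt.toZMod w).val : ℤ_[p]))
          = P ^ (k + e) * (w - (((PadicInt.toZMod w).val : ℤ_[p]))) := by rw [hw]; ring
      rw [h1, pow_succ]
      refine mul_dvd_mul_left _ ?_
      rw [← toZMod_eq_iff_dvd, toZMod_natCast_val]
    have hdisj : Pairwise (Function.onFun Disjoint A) := by
      intro m m' hmm
      simp only [Set.disjoint_left]
      rintro x ⟨-, h1⟩ ⟨-, h2⟩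
      have h3 : P ^ (k + e + 1) ∣ P ^ (k + e) * (((m'.val : ℤ_[p])) - ((m.val : ℤ_[p]))) := by
        have : P ^ (k + e) * (((m'.val : ℤ_[p])) - ((m.val : ℤ_[p])))
            = (eval x h - P ^ (k + e) * ((m.val : ℤ_[p])))
              - (eval x h - P ^ (k + e) * ((m'.val : ℤ_[p]))) := by ring
        rw [this]
        exact dvd_sub h1 h2
      rw [pow_succ, mul_dvd_mul_iff_left (pow_ne_zero (k + e) (p_ne_zero' (p := p)))] at h3
      have h4 := (toZMod_eq_iff_dvd _ _).2 h3
      rw [toZMod_natCast_val, toZMod_natCast_val] at h4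
      exact hmm h4.symm
    -- translation
    set cb : ZMod p := PadicInt.toZMod d with hcb
    have hc : cb ≠ 0 := by
      intro h0
      apply hdu
      have : PadicInt.toZMod d = PadicInt.toZMod 0 := by rw [map_zero, ← h0]
      simpa using (toZMod_eq_iff_dvd d 0).1 this
    set u : Fin n → ℤ_[p] := Pi.single i₀ (P ^ k) with hudef
    have hu : ∀ i, P ^ k ∣ u i := by
      intro i
      rw [hudef, Pi.single_apply]
      split <;> simp
    have htr : ∀ x, (∀ i, P ^ k ∣ x i - x₁ i) →
        ∃ ρ, eval (x + u) h = eval x h + P ^ (k + e) * d + ρ ∧ P ^ (k + e + 1) ∣ ρ := by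
      intro x hC
      obtain ⟨r, h1, h2⟩ := taylor1 h x u (P ^ k) hu
      have hsum : (∑ i, u i * eval x (pderiv i h)) = P ^ k * eval x (pderiv i₀ h) := by
        rw [Finset.sum_eq_single i₀]
        · rw [hudef, Pi.single_eq_same]
        · intro b _ hb
          rw [hudef, Pi.single_eq_of_ne hb, zero_mul]
        · intro hh
          exact absurd (Finset.mem_univ i₀) hh
      have hδ : P ^ k ∣ eval x (pderiv i₀ h) - eval x₁ (pderiv i₀ h) :=
        taylor0' (pderiv i₀ h) x₁ x (P ^ k) hC
      have h2k : P ^ (k + e + 1) ∣ P ^ k * P ^ k := by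
        rw [← pow_add]; exact pow_dvd_pow _ hkk
      refine ⟨P ^ k * (eval x (pderiv i₀ h) - eval x₁ (pderiv i₀ h)) + r, ?_, ?_⟩
      · rw [h1, hsum, pow_add]
        have : eval x (pderiv i₀ h)
            = eval x₁ (pderiv i₀ h) + (eval x (pderiv i₀ h) - eval x₁ (pderiv i₀ h)) := by
          ring
        rw [this, hd0]; ring
      · exact dvd_add (dvd_trans h2k (mul_dvd_mul_left _ hδ)) (dvd_trans h2k h2)
    have hd3 : ∀ m : ZMod p, P ^ (k + e + 1)
        ∣ P ^ (k + e) * (d + ((m.val : ℤ_[p])) - (((m + cb).val : ℤ_[p]))) := by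
      intro m
      rw [pow_succ]
      refine mul_dvd_mul_left _ ?_
      have : PadicInt.toZMod (d + ((m.val : ℤ_[p])) - (((m + cb).val : ℤ_[p])))
          = PadicInt.toZMod 0 := by
        rw [map_sub, map_add, toZMod_natCast_val, toZMod_natCast_val, map_zero, ← hcb]
        ring
      simpa using (toZMod_eq_iff_dvd _ _).1 this
    have hmem : ∀ (m : ZMod p) x, x ∈ A m ↔ x + u ∈ A (m + cb) := by
      intro m x
      constructor
      · rintro ⟨hC, hdvd⟩
        obtain ⟨ρ, hρ1, hρ2⟩ := htr x hC
        refine ⟨fun i => ?_, ?_⟩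
        · have : (x + u) i - x₁ i = (x i - x₁ i) + u i := by
            simp only [Pi.add_apply]; ring
          rw [this]; exact dvd_add (hC i) (hu i)
        · rw [hρ1]
          have : eval x h + P ^ (k + e) * d + ρ - P ^ (k + e) * (((m + cb).val : ℤ_[p]))
              = (eval x h - P ^ (k + e) * ((m.val : ℤ_[p])))
                + P ^ (k + e) * (d + ((m.val : ℤ_[p])) - (((m + cb).val : ℤ_[p]))) + ρ := by
            ring
          rw [this]
          exact dvd_add (dvd_add hdvd (hd3 m)) hρ2
      · rintro ⟨hC', hdvd⟩
        have hC : ∀ i, P ^ k ∣ x i - x₁ i := by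
          intro i
          have h1 := hC' i
          have : x i - x₁ i = ((x + u) i - x₁ i) - u i := by
            simp only [Pi.add_apply]; ring
          rw [this]; exact dvd_sub h1 (hu i)
        obtain ⟨ρ, hρ1, hρ2⟩ := htr x hC
        rw [hρ1] at hdvd
        refine ⟨hC, ?_⟩
        have : eval x h - P ^ (k + e) * ((m.val : ℤ_[p]))
            = (eval x h + P ^ (k + e) * d + ρ - P ^ (k + e) * (((m + cb).val : ℤ_[p])))
              - P ^ (k + e) * (d + ((m.val : ℤ_[p])) - (((m + cb).val : ℤ_[p]))) - ρ := by
          ring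
        rw [this]
        exact dvd_sub (dvd_sub hdvd (hd3 m)) hρ2
    have hAμ : ∀ m, haarN p n (A m) = haarN p n (A (m + cb)) := by
      intro m
      have : A m = (fun x => x + u) ⁻¹' (A (m + cb)) := Set.ext fun x => hmem m x
      rw [this]
      exact measure_preimage_add_right _ _ _
    have hall : ∀ m, haarN p n (A m) = haarN p n (A 0) := by
      have hstep : ∀ (t : ℕ), haarN p n (A ((t : ZMod p) * cb)) = haarN p n (A 0) := by
        intro t
        induction t with
        | zero => simp
        | succ t ih =>
            have hcst : ((t + 1 : ℕ) : ZMod p) * cb = (t : ZMod p) * cb + cb := by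
              push_cast; ring
            rw [hcst, ← hAμ ((t : ZMod p) * cb)]
            exact ih
      intro m
      have hm : m = (((m * cb⁻¹).val : ZMod p)) * cb := by
        rw [ZMod.natCast_rightInverse _, mul_assoc, inv_mul_cancel₀ hc, mul_one]
      rw [hm]
      exact hstep _
    have hS0U : S0 = ⋃ m : ZMod p, A m :=
      subset_antisymm hS0_sub (Set.iUnion_subset hA_sub)
    have hcount : haarN p n S0 = ∑ m : ZMod p, haarN p n (A m) := by
      rw [hS0U, ← tsum_fintype (L := SummationFilter.unconditional _)]
      exact measure_iUnion hdisj hAmeas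
    have hA0 : A 0 = S1 := by
      ext x
      simp only [hAdef, hS1def, Set.mem_setOf_eq, ZMod.val_zero, Nat.cast_zero, mul_zero,
        sub_zero]
    rw [hcount]
    have : ∀ m : ZMod p, haarN p n (A m) = haarN p n S1 := fun m => by rw [hall m, hA0]
    rw [Finset.sum_congr rfl (fun m _ => this m), Finset.sum_const, Finset.card_univ,
      ZMod.card p, nsmul_eq_mul]
  · -- degenerate case
    have h0 : S0 = ∅ := by
      rw [Set.eq_empty_iff_forall_notMem]
      rintro x ⟨hC, hdvd⟩
      apply hbase
      have : eval x₁ h = eval x h - (eval x h - eval x₁ h) := by ring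
      rw [this]
      exact dvd_sub hdvd (key x hC)
    have h1 : S1 = ∅ := by
      rw [Set.eq_empty_iff_forall_notMem]
      rintro x ⟨hC, hdvd⟩
      have : x ∈ S0 := ⟨hC, dvd_trans (pow_dvd_pow _ (Nat.le_succ _)) hdvd⟩
      rw [h0] at this
      exact this
    rw [h0, h1, measure_empty, mul_zero]



lemma global_step {n : ℕ} (D : Set (Fin n → ℤ_[p])) (hDm : MeasurableSet D)
    (hDcl : ∀ x y, x ∈ D → (∀ i, (p : ℤ_[p]) ∣ y i - x i) → y ∈ D)
    (h : MvPolynomial (Fin n) ℤ_[p]) (c : ℕ)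
    (hmin : ∀ x ∈ D, ∃ (i₀ : Fin n) (e : ℕ) (d : ℤ_[p]), e ≤ c ∧
      eval x (pderiv i₀ h) = (p : ℤ_[p]) ^ e * d ∧ ¬ (p : ℤ_[p]) ∣ d ∧
      (∀ i, (p : ℤ_[p]) ^ e ∣ eval x (pderiv i h)))
    (J : ℕ) (hJ : 2 * c + 1 ≤ J) :
    (p : ENNReal) * haarN p n (D ∩ Mset (J + 1) h) = haarN p n (D ∩ Mset J h) := by
  haveI : NeZero p := ⟨(p_prime (p := p)).ne_zero⟩
  have hm1 : MeasurableSet (D ∩ Mset (J + 1) h) := hDm.inter (measurable_Mset _ _)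
  have hm0 : MeasurableSet (D ∩ Mset J h) := hDm.inter (measurable_Mset _ _)
  rw [meas_part (haarN p n) (redN (c + 1)) (measurable_fiber (c + 1)) hm1,
    meas_part (haarN p n) (redN (c + 1)) (measurable_fiber (c + 1)) hm0, Finset.mul_sum]
  refine Finset.sum_congr rfl fun y _ => ?_
  by_cases hy : ∃ x₀, x₀ ∈ D ∩ redN (c + 1) ⁻¹' {y}
  · obtain ⟨x₀, hx₀D, hx₀y⟩ := hy
    have hx₀y' : redN (c + 1) x₀ = y := hx₀y
    obtain ⟨i₀, e, d, hec, hd0, hdu, hdall⟩ := hmin x₀ hx₀D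
    obtain ⟨k, hJk⟩ : ∃ k, J = k + e := ⟨J - e, (Nat.sub_add_cancel (by omega)).symm⟩
    subst hJk
    have hkc : c + 1 ≤ k := by omega
    have hek : e + 1 ≤ k := by omega
    -- the fiber is contained in D
    have hfibD : redN (c + 1) ⁻¹' {y} ⊆ D := by
      intro z hz
      have hz' : redN (c + 1) z = redN (c + 1) x₀ := by
        rw [hx₀y']; exact hz
      refine hDcl x₀ z hx₀D fun i => ?_
      exact dvd_trans (dvd_pow_self (p : ℤ_[p]) (Nat.succ_ne_zero c))
        ((mem_fiber_iff (c + 1) z x₀).1 hz' i)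
    have hsimp : ∀ W : Set (Fin n → ℤ_[p]),
        D ∩ W ∩ redN (c + 1) ⁻¹' {y} = W ∩ redN (c + 1) ⁻¹' {y} := by
      intro W
      ext x
      exact ⟨fun ⟨⟨_, hW⟩, hf⟩ => ⟨hW, hf⟩, fun ⟨hW, hf⟩ => ⟨⟨hfibD hf, hW⟩, hf⟩⟩
    rw [hsimp, hsimp]
    have hmW1 : MeasurableSet (Mset (k + e + 1) h ∩ redN (c + 1) ⁻¹' {y}) :=
      (measurable_Mset _ _).inter (measurable_fiber _ _)
    have hmW0 : MeasurableSet (Mset (k + e) h ∩ redN (c + 1) ⁻¹' {y}) :=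
      (measurable_Mset _ _).inter (measurable_fiber _ _)
    rw [meas_part (haarN p n) (redN k) (measurable_fiber k) hmW1,
      meas_part (haarN p n) (redN k) (measurable_fiber k) hmW0, Finset.mul_sum]
    refine Finset.sum_congr rfl fun z _ => ?_
    by_cases hz : ∃ x₂, x₂ ∈ redN (c + 1) ⁻¹' {y} ∩ redN k ⁻¹' {z}
    · obtain ⟨x₂, hx₂y, hx₂z⟩ := hz
      have hx₂z' : redN k x₂ = z := hx₂z
      have hx₂y' : redN (c + 1) x₂ = y := hx₂y
      have hsub : redN k ⁻¹' {z} ⊆ redN (c + 1) ⁻¹' {y} := by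
        intro w hw
        have hw' : redN k w = redN k x₂ := by rw [hx₂z']; exact hw
        have : redN (c + 1) w = redN (c + 1) x₂ :=
          (mem_fiber_iff (c + 1) w x₂).2 fun i =>
            dvd_trans (pow_dvd_pow _ hkc) ((mem_fiber_iff k w x₂).1 hw' i)
        rw [Set.mem_preimage, Set.mem_singleton_iff, this, hx₂y']
      have hsimp2 : ∀ W : Set (Fin n → ℤ_[p]),
          W ∩ redN (c + 1) ⁻¹' {y} ∩ redN k ⁻¹' {z} = W ∩ redN k ⁻¹' {z} := by
        intro W
        ext x
        exact ⟨fun ⟨⟨hW, _⟩, hf⟩ => ⟨hW, hf⟩, fun ⟨hW, hf⟩ => ⟨⟨hW, hsub hf⟩, hf⟩⟩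
      rw [hsimp2, hsimp2]
      -- transfer derivative data from x₀ to x₂
      have hdiff : ∀ i, (p : ℤ_[p]) ^ (c + 1) ∣ x₂ i - x₀ i := by
        have : redN (c + 1) x₂ = redN (c + 1) x₀ := by rw [hx₂y', hx₀y']
        exact (mem_fiber_iff (c + 1) x₂ x₀).1 this
      have hdall₂ : ∀ i, (p : ℤ_[p]) ^ e ∣ eval x₂ (pderiv i h) := by
        intro i
        have h1 : (p : ℤ_[p]) ^ (c + 1) ∣ eval x₂ (pderiv i h) - eval x₀ (pderiv i h) :=
          taylor0' (pderiv i h) x₀ x₂ _ hdiff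
        have h2 : eval x₂ (pderiv i h)
            = eval x₀ (pderiv i h) + (eval x₂ (pderiv i h) - eval x₀ (pderiv i h)) := by ring
        rw [h2]
        exact dvd_add (hdall i) (dvd_trans (pow_dvd_pow _ (by omega)) h1)
      obtain ⟨w, hw⟩ : (p : ℤ_[p]) ^ (e + 1)
          ∣ eval x₂ (pderiv i₀ h) - eval x₀ (pderiv i₀ h) :=
        dvd_trans (pow_dvd_pow _ (by omega)) (taylor0' (pderiv i₀ h) x₀ x₂ _ hdiff)
      have hd0₂ : eval x₂ (pderiv i₀ h) = (p : ℤ_[p]) ^ e * (d + (p : ℤ_[p]) * w) := by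
        have : eval x₂ (pderiv i₀ h)
            = eval x₀ (pderiv i₀ h) + (eval x₂ (pderiv i₀ h) - eval x₀ (pderiv i₀ h)) := by
          ring
        rw [this, hw, hd0, pow_succ]
        ring
      have hdu₂ : ¬ (p : ℤ_[p]) ∣ (d + (p : ℤ_[p]) * w) := by
        intro hc
        apply hdu
        have : d = (d + (p : ℤ_[p]) * w) - (p : ℤ_[p]) * w := by ring
        rw [this]
        exact dvd_sub hc (dvd_mul_right _ _)
      -- identify fibers with balls around x₂
      have hfib_ball : redN k ⁻¹' {z} = {x | ∀ i, (p : ℤ_[p]) ^ k ∣ x i - x₂ i} := by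
        ext x
        rw [Set.mem_preimage, Set.mem_singleton_iff, ← hx₂z']
        exact mem_fiber_iff k x x₂
      have hclass := class_step h x₂ e k i₀ (d + (p : ℤ_[p]) * w) hek hdall₂ hd0₂ hdu₂
      have hset1 : Mset (k + e + 1) h ∩ redN k ⁻¹' {z}
          = {x | (∀ i, (p : ℤ_[p]) ^ k ∣ x i - x₂ i)
              ∧ (p : ℤ_[p]) ^ (k + e + 1) ∣ eval x h} := by
        rw [hfib_ball]
        ext x
        exact ⟨fun ⟨h1, h2⟩ => ⟨h2, h1⟩, fun ⟨h1, h2⟩ => ⟨h2, h1⟩⟩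
      have hset0 : Mset (k + e) h ∩ redN k ⁻¹' {z}
          = {x | (∀ i, (p : ℤ_[p]) ^ k ∣ x i - x₂ i)
              ∧ (p : ℤ_[p]) ^ (k + e) ∣ eval x h} := by
        rw [hfib_ball]
        ext x
        exact ⟨fun ⟨h1, h2⟩ => ⟨h2, h1⟩, fun ⟨h1, h2⟩ => ⟨h2, h1⟩⟩
      rw [hset1, hset0]
      exact hclass
    · have hzempty : ∀ W : Set (Fin n → ℤ_[p]),
          W ∩ redN (c + 1) ⁻¹' {y} ∩ redN k ⁻¹' {z} = ∅ := by
        intro W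
        rw [Set.eq_empty_iff_forall_notMem]
        rintro x ⟨⟨-, hxy⟩, hxz⟩
        exact hz ⟨x, hxy, hxz⟩
      rw [hzempty, hzempty, measure_empty, mul_zero]
  · have hyempty : ∀ W : Set (Fin n → ℤ_[p]),
        D ∩ W ∩ redN (c + 1) ⁻¹' {y} = ∅ := by
      intro W
      rw [Set.eq_empty_iff_forall_notMem]
      rintro x ⟨⟨hxD, -⟩, hxy⟩
      exact hy ⟨x, hxD, hxy⟩
    rw [hyempty, hyempty, measure_empty, mul_zero]




lemma mem_Mset_iff_le_val {n : ℕ} {h : MvPolynomial (Fin n) ℤ_[p]} {x : Fin n → ℤ_[p]}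
    (hx : eval x h ≠ 0) (J : ℕ) : x ∈ Mset J h ↔ (J : ℤ) ≤ (eval x h).valuation := by
  rw [Mset, Set.mem_setOf_eq, ← Ideal.mem_span_singleton,
    PadicInt.mem_span_pow_iff_le_valuation _ hx]
  exact Nat.cast_le.symm

lemma lint_repr {n : ℕ} (D : Set (Fin n → ℤ_[p])) (hDm : MeasurableSet D)
    (h : MvPolynomial (Fin n) ℤ_[p]) (s : ℝ) (hs : 0 < s) :
    ∫ x in D, ‖eval x h‖ ^ s ∂(haarN p n)
      = (∑' J : ℕ, ENNReal.ofReal (((p : ℝ) ^ (-(J : ℤ))) ^ s)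
          * (haarN p n (D ∩ Mset J h) - haarN p n (D ∩ Mset (J + 1) h))).toReal := by
  have hcont : Continuous fun x : Fin n → ℤ_[p] => ‖eval x h‖ ^ s :=
    ((continuous_mveval h).norm).rpow_const fun x => Or.inr hs.le
  rw [integral_eq_lintegral_of_nonneg_ae
    (Filter.Eventually.of_forall fun x => Real.rpow_nonneg (norm_nonneg _) s)
    hcont.aestronglyMeasurable]
  congr 1
  -- pointwise decomposition
  have hpt : ∀ x : Fin n → ℤ_[p], ENNReal.ofReal (‖eval x h‖ ^ s)
      = ∑' J : ℕ, Set.indicator (Mset J h \ Mset (J + 1) h)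
          (fun _ => ENNReal.ofReal (((p : ℝ) ^ (-(J : ℤ))) ^ s)) x := by
    intro x
    by_cases hx0 : eval x h = 0
    · have hL : ENNReal.ofReal (‖eval x h‖ ^ s) = 0 := by
        rw [hx0, norm_zero, Real.zero_rpow hs.ne', ENNReal.ofReal_zero]
      have hR : ∀ J : ℕ, Set.indicator (Mset J h \ Mset (J + 1) h)
          (fun _ => ENNReal.ofReal (((p : ℝ) ^ (-(J : ℤ))) ^ s)) x = 0 := by
        intro J
        apply Set.indicator_of_notMem
        rintro ⟨-, hmem⟩
        exact hmem (by rw [Mset, Set.mem_setOf_eq, hx0]; exact dvd_zero _)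
      rw [hL, tsum_congr hR, tsum_zero]
    · set J₀ := (eval x h).valuation with hJ₀
      have hval : (eval x h).valuation = (J₀ : ℤ) :=
        rfl
      have hmem : ∀ J : ℕ, x ∈ Mset J h ↔ J ≤ J₀ := by
        intro J
        rw [mem_Mset_iff_le_val hx0, hval]
        exact_mod_cast Iff.rfl
      have hxW : ∀ J : ℕ, x ∈ Mset J h \ Mset (J + 1) h ↔ J = J₀ := by
        intro J
        rw [Set.mem_diff, hmem, hmem]
        omega
      rw [tsum_eq_single J₀ ?side]
      · rw [Set.indicator_of_mem ((hxW J₀).2 rfl)]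
        congr 1
        rw [PadicInt.norm_eq_zpow_neg_valuation hx0, hval]
      · intro J hJ
        exact Set.indicator_of_notMem (fun hW => hJ ((hxW J).1 hW)) _
  rw [lintegral_congr hpt]
  rw [lintegral_tsum fun J => (Measurable.indicator measurable_const
    ((measurable_Mset J h).diff (measurable_Mset (J + 1) h))).aemeasurable]
  refine tsum_congr fun J => ?_
  rw [lintegral_indicator ((measurable_Mset J h).diff (measurable_Mset (J + 1) h)),
    setLIntegral_const, Measure.restrict_apply
      ((measurable_Mset J h).diff (measurable_Mset (J + 1) h))]
  congr 1
  have hseteq : (Mset J h \ Mset (J + 1) h) ∩ D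
      = (D ∩ Mset J h) \ (D ∩ Mset (J + 1) h) := by
    ext x
    constructor
    · rintro ⟨⟨h1, h2⟩, h3⟩
      exact ⟨⟨h3, h1⟩, fun hc => h2 hc.2⟩
    · rintro ⟨⟨h3, h1⟩, h2⟩
      exact ⟨⟨h1, fun hc => h2 ⟨h3, hc⟩⟩, h3⟩
  rw [hseteq]
  refine measure_diff (fun x hx => ⟨hx.1, ?_⟩)
    (hDm.inter (measurable_Mset (J + 1) h)).nullMeasurableSet (measure_ne_top _ _)
  exact dvd_trans (pow_dvd_pow _ (Nat.le_succ _)) hx.2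




-- extraction of the minimal-derivative data at a point
lemma extract_min {n : ℕ} (f : MvPolynomial (Fin n) ℤ_[p]) (x : Fin n → ℤ_[p]) (c : ℕ)
    (hb : Finset.univ.inf (fun i => valInf p (eval x (pderiv i f))) ≤ (c : ℕ∞))
    (hcrit : ∃ i, eval x (pderiv i f) ≠ 0) :
    ∃ (i₀ : Fin n) (e : ℕ) (d : ℤ_[p]), e ≤ c ∧
      eval x (pderiv i₀ f) = (p : ℤ_[p]) ^ e * d ∧ ¬ (p : ℤ_[p]) ∣ d ∧
      (∀ i, (p : ℤ_[p]) ^ e ∣ eval x (pderiv i f)) := by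
  obtain ⟨iw, hiw⟩ := hcrit
  obtain ⟨i₀, -, hinf⟩ := Finset.exists_mem_eq_inf Finset.univ ⟨iw, Finset.mem_univ iw⟩
    (fun i => valInf p (eval x (pderiv i f)))
  rw [hinf] at hb
  have hz0 : eval x (pderiv i₀ f) ≠ 0 := by
    intro h0
    simp only [valInf, if_pos h0] at hb
    simp at hb
  simp only [valInf, if_neg hz0] at hb
  set e := (eval x (pderiv i₀ f)).valuation with he
  have hec : e ≤ c := by exact_mod_cast hb
  have hspec := PadicInt.unitCoeff_spec hz0
  refine ⟨i₀, e, (PadicInt.unitCoeff hz0 : ℤ_[p]), hec, hspec.trans (mul_comm _ _), ?_, ?_⟩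
  · rw [← PadicInt.norm_lt_one_iff_dvd, PadicInt.norm_units]
    simp
  · intro i
    by_cases hzi : eval x (pderiv i f) = 0
    · rw [hzi]; exact dvd_zero _
    · have hle := Finset.inf_le (Finset.mem_univ i)
        (f := fun i => valInf p (eval x (pderiv i f)))
      rw [hinf] at hle
      simp only [valInf, if_neg hz0, if_neg hzi] at hle
      have h1 : e ≤ (eval x (pderiv i f)).valuation := by exact_mod_cast hle
      have h2 : e ≤ (eval x (pderiv i f)).valuation := h1
      rw [← Ideal.mem_span_singleton]
      exact (PadicInt.mem_span_pow_iff_le_valuation _ hzi e).2 h2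



/-- **Corollary.** If `f` has no critical points in `D` (the preimage of
`D̄ ⊆ 𝔽_p^n`) and `β > 2c(f,D) + 1`, then adding `p^β g` does not change the integral. -/
theorem stmt6 (p n : ℕ) [Fact p.Prime]
    (Dbar : Set (Fin n → ZMod p))
    (D : Set (Fin n → ℤ_[p]))
    (hD : D = {x | (fun i => PadicInt.toZMod (x i)) ∈ Dbar})
    (f g : MvPolynomial (Fin n) ℤ_[p])
    (hcrit : ∀ P ∈ D, ∃ i, MvPolynomial.eval P (MvPolynomial.pderiv i f) ≠ 0)
    (β : ℕ) (hβpos : 0 < β)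
    (hβ : 2 * (⨆ P ∈ D, Finset.univ.inf
        (fun i => valInf p (MvPolynomial.eval P (MvPolynomial.pderiv i f)))) + 1
      < (β : ℕ∞))
    (F : MvPolynomial (Fin n) ℤ_[p]) (hF : F = f + (p : ℤ_[p]) ^ β • g) :
    ∀ s : ℝ, 0 < s →
      ∫ x in D, ‖MvPolynomial.eval x f‖ ^ s ∂(haarN p n)
        = ∫ x in D, ‖MvPolynomial.eval x F‖ ^ s ∂(haarN p n) := by
  intro s hs
  have hppos : (0 : ℕ) < p := (Fact.out : p.Prime).pos
  -- extract the finite bound `c`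
  have hSne : (⨆ P ∈ D, Finset.univ.inf
      (fun i => valInf p (eval P (pderiv i f)))) ≠ ⊤ := by
    intro hS
    rw [hS] at hβ
    have h2 : (2 : ℕ∞) * ⊤ = ⊤ := WithTop.mul_top (by exact (two_ne_zero : (2 : ℕ∞) ≠ 0))
    rw [h2, top_add] at hβ
    exact (not_top_lt) hβ
  set c := (⨆ P ∈ D, Finset.univ.inf
      (fun i => valInf p (eval P (pderiv i f)))).toNat with hcdef
  have hcS : (c : ℕ∞) = ⨆ P ∈ D, Finset.univ.inf
      (fun i => valInf p (eval P (pderiv i f))) := ENat.coe_toNat hSne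
  have hβc : 2 * c + 2 ≤ β := by
    rw [← hcS] at hβ
    have h1 : 2 * c + 1 < β := by exact_mod_cast hβ
    omega
  -- measurability and congruence properties of D
  have hDm : MeasurableSet D := by
    rw [hD]
    have hset : {x : Fin n → ℤ_[p] | (fun i => PadicInt.toZMod (x i)) ∈ Dbar}
        = ⋃ v ∈ Dbar, ⋂ i, Mset 1 ((X i : MvPolynomial (Fin n) ℤ_[p])
            - C (((v i).val : ℤ_[p]))) := by
      ext x
      simp only [Set.mem_setOf_eq, Set.mem_iUnion, Set.mem_iInter, mem_Mset_sub_iff,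
        eval_X, pow_one]
      constructor
      · intro hx
        refine ⟨_, hx, fun i => ?_⟩
        refine (toZMod_eq_iff_dvd _ _).1 ?_
        rw [toZMod_natCast_val]
      · rintro ⟨v, hv, hvx⟩
        have hfun : (fun i => PadicInt.toZMod (x i)) = v := by
          funext i
          have h1 := (toZMod_eq_iff_dvd (x i) (((v i).val : ℤ_[p]))).2 (hvx i)
          rw [toZMod_natCast_val] at h1
          exact h1
        rw [hfun]; exact hv
    rw [hset]
    exact MeasurableSet.biUnion (Set.to_countable _)
      fun v _ => MeasurableSet.iInter fun i => measurable_Mset _ _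
  have hDcl : ∀ x y, x ∈ D → (∀ i, (p : ℤ_[p]) ∣ y i - x i) → y ∈ D := by
    intro x y hx hdvd
    rw [hD] at hx ⊢
    have hfun : (fun i => PadicInt.toZMod (y i)) = (fun i => PadicInt.toZMod (x i)) :=
      funext fun i => (toZMod_eq_iff_dvd _ _).2 (hdvd i)
    rw [Set.mem_setOf_eq, hfun]
    exact hx
  -- minimal derivative data
  have hminf : ∀ x ∈ D, ∃ (i₀ : Fin n) (e : ℕ) (d : ℤ_[p]), e ≤ c ∧
      eval x (pderiv i₀ f) = (p : ℤ_[p]) ^ e * d ∧ ¬ (p : ℤ_[p]) ∣ d ∧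
      (∀ i, (p : ℤ_[p]) ^ e ∣ eval x (pderiv i f)) := by
    intro x hx
    refine extract_min f x c ?_ (hcrit x hx)
    rw [hcS]
    exact le_biSup (fun P => Finset.univ.inf fun i => valInf p (eval P (pderiv i f))) hx
  have hevF : ∀ (x : Fin n → ℤ_[p]) (i : Fin n), eval x (pderiv i F)
      = eval x (pderiv i f) + (p : ℤ_[p]) ^ β * eval x (pderiv i g) := by
    intro x i
    simp only [hF, map_add, Derivation.map_smul, smul_eval]
  have hminF : ∀ x ∈ D, ∃ (i₀ : Fin n) (e : ℕ) (d : ℤ_[p]), e ≤ c ∧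
      eval x (pderiv i₀ F) = (p : ℤ_[p]) ^ e * d ∧ ¬ (p : ℤ_[p]) ∣ d ∧
      (∀ i, (p : ℤ_[p]) ^ e ∣ eval x (pderiv i F)) := by
    intro x hx
    obtain ⟨i₀, e, d, hec, hd0, hdu, hdall⟩ := hminf x hx
    have heβ : e ≤ β := by omega
    refine ⟨i₀, e, d + (p : ℤ_[p]) ^ (β - e) * eval x (pderiv i₀ g), hec, ?_, ?_, ?_⟩
    · rw [hevF, hd0]
      have hpe : (p : ℤ_[p]) ^ β = (p : ℤ_[p]) ^ e * (p : ℤ_[p]) ^ (β - e) := by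
        rw [← pow_add]
        congr 1
        omega
      rw [hpe]; ring
    · intro hdvd
      apply hdu
      have hd : d = (d + (p : ℤ_[p]) ^ (β - e) * eval x (pderiv i₀ g))
          - (p : ℤ_[p]) ^ (β - e) * eval x (pderiv i₀ g) := by ring
      rw [hd]
      refine dvd_sub hdvd (dvd_mul_of_dvd_left (dvd_pow_self _ ?_) _)
      omega
    · intro i
      rw [hevF]
      exact dvd_add (hdall i) (dvd_mul_of_dvd_left (pow_dvd_pow _ heβ) _)
  -- equality of measures of the level sets
  have hMle : ∀ J, J ≤ β → D ∩ Mset J f = D ∩ Mset J F := by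
    intro J hJ
    ext x
    simp only [Set.mem_inter_iff, Mset, Set.mem_setOf_eq]
    refine and_congr_right fun hx => ?_
    have hFf : eval x F = eval x f + (p : ℤ_[p]) ^ β * eval x g := by
      rw [hF, map_add, smul_eval]
    have hgd : (p : ℤ_[p]) ^ J ∣ (p : ℤ_[p]) ^ β * eval x g :=
      dvd_mul_of_dvd_left (pow_dvd_pow _ hJ) _
    constructor
    · intro h1; rw [hFf]; exact dvd_add h1 hgd
    · intro h1
      have hfm : eval x f = eval x F - (p : ℤ_[p]) ^ β * eval x g := by
        rw [hFf]; ring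
      rw [hfm]; exact dvd_sub h1 hgd
  have hMge : ∀ J, β ≤ J → haarN p n (D ∩ Mset J f) = haarN p n (D ∩ Mset J F) := by
    refine Nat.le_induction ?_ ?_
    · rw [hMle β le_rfl]
    · intro J hJβ ih
      have h1 := global_step D hDm hDcl f c hminf J (by omega)
      have h2 := global_step D hDm hDcl F c hminF J (by omega)
      have h3 : (p : ENNReal) * haarN p n (D ∩ Mset (J + 1) f)
          = (p : ENNReal) * haarN p n (D ∩ Mset (J + 1) F) := by rw [h1, h2, ih]
      rwa [ENNReal.mul_right_inj (by exact_mod_cast hppos.ne')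
        (ENNReal.natCast_ne_top p)] at h3
  have hM : ∀ J : ℕ, haarN p n (D ∩ Mset J f) = haarN p n (D ∩ Mset J F) := by
    intro J
    rcases le_total J β with hle | hge
    · rw [hMle J hle]
    · exact hMge J hge
  rw [lint_repr D hDm f s hs, lint_repr D hDm F s hs]
  congr 1
  exact tsum_congr fun J => by rw [hM J, hM (J + 1)]

end IgusaTS
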